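/- Existence part of the cohomology lemma (Lemma 6.1): let ω ∈ ℝ² satisfy the Diophantine condition with constants ν ∈ (0,1] and τ ≥ 1, let λ ∈ ℝ with 0 < λ < 1, and let (η̂_k)_{k∈ℤ²} be complex coefficients such that |η̂_k| ≤ C e^{−δ(|k₁|+|k₂|)} for some constants C, δ > 0. Set μ = −η̂₀, ĝ₀ = 0, and ĝ_k = η̂_k / d_k for k ≠ 0, where d_k = e^{2πi ω·k} − (1+λ) + λ e^{−2πi ω·k}. Then the family (ĝ_k)_{k∈ℤ²} is absolutely summable, and, defining g(ψ) = Σ_{k∈ℤ²} ĝ_k e^{i k·ψ} and η(ψ) = Σ_{k∈ℤ²} η̂_k e^{i k·ψ}, for every ψ ∈ ℝ² one has g(ψ + 2πω) − (1+λ) g(ψ) + λ g(ψ − 2πω) − μ = η(ψ). -/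

import Mathlib

open Complex Real

lemma norm_exp_two_pi_I (x : ℝ) : ‖Complex.exp (2 * ↑π * Complex.I * (x:ℂ))‖ = 1 := by
  have : 2 * (π:ℂ) * Complex.I * (x:ℂ) = ((2 * π * x : ℝ) : ℂ) * Complex.I := by
    push_cast; ring
  rw [this, Complex.norm_exp_ofReal_mul_I]

lemma norm_exp_two_pi_I_sub_one (x : ℝ) :
    ‖Complex.exp (2 * ↑π * Complex.I * (x:ℂ)) - 1‖ = 2 * |Real.sin (π * x)| := by
  have h : 2 * (π:ℂ) * Complex.I * (x:ℂ) = ((2 * π * x : ℝ) : ℂ) * Complex.I := by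
    push_cast; ring
  rw [h, Complex.exp_mul_I]
  rw [← Complex.ofReal_cos, ← Complex.ofReal_sin]
  have : (Real.cos (2*π*x) : ℂ) + (Real.sin (2*π*x) : ℂ) * Complex.I - 1
      = ((Real.cos (2*π*x) - 1 : ℝ) : ℂ) + ((Real.sin (2*π*x) : ℝ) : ℂ) * Complex.I := by
    push_cast; ring
  rw [this, Complex.norm_add_mul_I]
  have key : (Real.cos (2*π*x) - 1)^2 + (Real.sin (2*π*x))^2 = (2 * |Real.sin (π * x)|)^2 := by
    have h1 : Real.cos (2*(π*x)) = 2 * Real.cos (π*x)^2 - 1 := Real.cos_two_mul _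
    have h2 : Real.sin (π*x)^2 + Real.cos (π*x)^2 = 1 := Real.sin_sq_add_cos_sq _
    have h3 : Real.sin (2*(π*x))^2 + Real.cos (2*(π*x))^2 = 1 := Real.sin_sq_add_cos_sq _
    have h4 : |Real.sin (π*x)|^2 = Real.sin (π*x)^2 := sq_abs _
    have h5 : (2:ℝ)*π*x = 2*(π*x) := by ring
    rw [h5] at *
    nlinarith
  rw [key, Real.sqrt_sq (by positivity)]

lemma two_abs_le_abs_sin {x : ℝ} (hx : |x| ≤ 1/2) : 2 * |x| ≤ |Real.sin (π * x)| := by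
  have hπ := Real.pi_pos
  have h1 : 2/π * (π*|x|) ≤ Real.sin (π*|x|) :=
    Real.mul_le_sin (by positivity) (by nlinarith [abs_nonneg x])
  have h1' : 2/π * (π*|x|) = 2*|x| := by field_simp
  have h2 : Real.sin (π*|x|) = |Real.sin (π*x)| := by
    rcases abs_cases x with ⟨h, hx0⟩ | ⟨h, hx0⟩
    · rw [h, _root_.abs_of_nonneg
        (Real.sin_nonneg_of_nonneg_of_le_pi (by positivity) (by nlinarith))]
    · rw [h, _root_.abs_of_nonpos
        (Real.sin_nonpos_of_nonpos_of_neg_pi_le (by nlinarith)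
          (by nlinarith [abs_nonneg x, (abs_le.mp hx).1])),
        show π*(-x) = -(π*x) by ring, Real.sin_neg]
  rw [h1', h2] at h1; exact h1

lemma summable_exp_decay {c : ℝ} (hc : 0 < c) :
    Summable (fun k : ℤ × ℤ => Real.exp (-c * ((k.1.natAbs : ℝ) + k.2.natAbs))) := by
  have hr0 : (0:ℝ) ≤ Real.exp (-c) := (Real.exp_pos _).le
  have hr1 : Real.exp (-c) < 1 := Real.exp_lt_one_iff.mpr (by linarith)
  have hn : Summable (fun n : ℕ => Real.exp (-c * n)) := by
    have := summable_geometric_of_lt_one hr0 hr1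
    refine this.congr fun n => ?_
    rw [← Real.exp_nat_mul]; ring_nf
  have hf : Summable (fun n : ℤ => Real.exp (-c * n.natAbs)) := by
    apply Summable.of_nat_of_neg
    · exact hn.congr fun n => by simp
    · exact hn.congr fun n => by simp
  have := hf.mul_of_nonneg hf (fun _ => (Real.exp_pos _).le) (fun _ => (Real.exp_pos _).le)
  refine this.congr fun k => ?_
  rw [← Real.exp_add]; ring_nf

/-- Existence part of the cohomology lemma: the Fourier coefficients obtained by
dividing by the small divisors are absolutely summable and the resulting function
solves the cohomology equation. -/
theorem cohomology_equation_existence (ω : ℝ × ℝ) (ν τ l : ℝ)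
    (hν : 0 < ν) (hν1 : ν ≤ 1) (hτ : 1 ≤ τ) (hl0 : 0 < l) (hl1 : l < 1)
    (hdio : ∀ m₁ : ℤ × ℤ, m₁ ≠ 0 → ∀ m₂ : ℤ,
      ν * ((max m₁.1.natAbs m₁.2.natAbs : ℕ) : ℝ) ^ (-τ) ≤
        |(m₁.1 : ℝ) * ω.1 + (m₁.2 : ℝ) * ω.2 + m₂|)
    (η : ℤ × ℤ → ℂ) (C δ : ℝ) (hC : 0 < C) (hδ : 0 < δ)
    (hdecay : ∀ k : ℤ × ℤ, ‖η k‖ ≤ C * Real.exp (-δ * (k.1.natAbs + k.2.natAbs))) :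
    let d : ℤ × ℤ → ℂ := fun k =>
      Complex.exp (2 * π * Complex.I * ((ω.1 : ℂ) * k.1 + (ω.2 : ℂ) * k.2))
        - (1 + (l : ℂ))
        + (l : ℂ) * Complex.exp (-(2 * π * Complex.I * ((ω.1 : ℂ) * k.1 + (ω.2 : ℂ) * k.2)))
    let ghat : ℤ × ℤ → ℂ := fun k => if k = 0 then 0 else η k / d k
    let μ : ℂ := -η 0
    let g : ℝ × ℝ → ℂ := fun ψ =>
      ∑' k : ℤ × ℤ, ghat k * Complex.exp (Complex.I * ((k.1 : ℂ) * ψ.1 + (k.2 : ℂ) * ψ.2))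
    let e : ℝ × ℝ → ℂ := fun ψ =>
      ∑' k : ℤ × ℤ, η k * Complex.exp (Complex.I * ((k.1 : ℂ) * ψ.1 + (k.2 : ℂ) * ψ.2))
    Summable (fun k : ℤ × ℤ => ‖ghat k‖) ∧
    ∀ ψ : ℝ × ℝ,
      g (ψ.1 + 2 * π * ω.1, ψ.2 + 2 * π * ω.2) - (1 + (l : ℂ)) * g ψ
        + (l : ℂ) * g (ψ.1 - 2 * π * ω.1, ψ.2 - 2 * π * ω.2) - μ = e ψ := by
  intro d ghat μ g e
  have hπ := Real.pi_pos
  set t : ℤ × ℤ → ℝ := fun k => (k.1:ℝ)*ω.1 + (k.2:ℝ)*ω.2 with ht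
  have hcast : ∀ k : ℤ×ℤ, ((ω.1 : ℂ) * k.1 + (ω.2 : ℂ) * k.2) = ((t k : ℝ) : ℂ) := by
    intro k; simp only [ht]; push_cast; ring
  set N : ℤ×ℤ → ℝ := fun k => ((max k.1.natAbs k.2.natAbs : ℕ) : ℝ) with hN
  set S : ℤ×ℤ → ℝ := fun k => (k.1.natAbs : ℝ) + k.2.natAbs with hS
  have hN0 : ∀ k, 0 ≤ N k := fun k => Nat.cast_nonneg _
  have hS0 : ∀ k, 0 ≤ S k := fun k => by
    simp only [hS]; positivity
  have hN1 : ∀ k : ℤ×ℤ, k ≠ 0 → 1 ≤ N k := by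
    intro k hk
    have h1 : ¬(k.1 = 0 ∧ k.2 = 0) := by
      intro h; exact hk (Prod.ext h.1 h.2)
    have h2 : (1:ℕ) ≤ max k.1.natAbs k.2.natAbs := by
      rcases not_and_or.mp h1 with h | h
      · have := Int.natAbs_pos.mpr h; omega
      · have := Int.natAbs_pos.mpr h; omega
    simp only [hN]
    exact_mod_cast h2
  have hNS : ∀ k, N k ≤ S k := by
    intro k
    have : max k.1.natAbs k.2.natAbs ≤ k.1.natAbs + k.2.natAbs := by omega
    simp only [hN, hS]; exact_mod_cast this
  -- lower bound on divisors
  have hdlb : ∀ k : ℤ×ℤ, k ≠ 0 → 4 * (ν * N k ^ (-τ)) * (1 - l) ≤ ‖d k‖ := by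
    intro k hk
    set x : ℝ := t k - round (t k) with hxdef
    have hx2 : |x| ≤ 1/2 := abs_sub_round _
    have hdio' : ν * N k ^ (-τ) ≤ |x| := by
      have h := hdio k hk (-(round (t k)))
      calc ν * N k ^ (-τ) ≤ |(k.1 : ℝ) * ω.1 + (k.2 : ℝ) * ω.2 + ((-(round (t k)) : ℤ) : ℝ)| := h
        _ = |x| := by rw [hxdef, ht]; push_cast; ring_nf
    have hexp : Complex.exp (2*(π:ℂ)*Complex.I*((ω.1:ℂ)*k.1+(ω.2:ℂ)*k.2))
        = Complex.exp (2*(π:ℂ)*Complex.I*(x:ℂ)) := by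
      rw [hcast k]
      have harg : (2*(π:ℂ)*Complex.I*((t k : ℝ):ℂ))
          = 2*(π:ℂ)*Complex.I*(x:ℂ) + ((round (t k) : ℤ) : ℂ) * (2*π*Complex.I) := by
        rw [hxdef]; push_cast; ring
      rw [harg, Complex.exp_add, Complex.exp_int_mul_two_pi_mul_I, mul_one]
    have hu : Complex.exp (2*(π:ℂ)*Complex.I*(x:ℂ)) ≠ 0 := Complex.exp_ne_zero _
    have hfact : d k = (Complex.exp (2*(π:ℂ)*Complex.I*(x:ℂ)) - 1)
        * (1 - (l:ℂ) * (Complex.exp (2*(π:ℂ)*Complex.I*(x:ℂ)))⁻¹) := by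
      show Complex.exp _ - (1+(l:ℂ)) + (l:ℂ) * Complex.exp (-_) = _
      rw [Complex.exp_neg, hexp]
      field_simp
      ring
    have h1 : ‖Complex.exp (2*(π:ℂ)*Complex.I*(x:ℂ)) - 1‖ = 2*|Real.sin (π*x)| :=
      norm_exp_two_pi_I_sub_one x
    have h2 : 2*|x| ≤ |Real.sin (π*x)| := two_abs_le_abs_sin hx2
    have h3 : 1 - l ≤ ‖1 - (l:ℂ) * (Complex.exp (2*(π:ℂ)*Complex.I*(x:ℂ)))⁻¹‖ := by
      have hnorm : ‖(l:ℂ) * (Complex.exp (2*(π:ℂ)*Complex.I*(x:ℂ)))⁻¹‖ = l := by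
        rw [norm_mul, norm_inv, norm_exp_two_pi_I]
        simp [Complex.norm_real, abs_of_pos hl0]
      calc 1 - l = ‖(1:ℂ)‖ - ‖(l:ℂ) * (Complex.exp (2*(π:ℂ)*Complex.I*(x:ℂ)))⁻¹‖ := by
            rw [hnorm]; simp
        _ ≤ ‖1 - (l:ℂ) * (Complex.exp (2*(π:ℂ)*Complex.I*(x:ℂ)))⁻¹‖ := norm_sub_norm_le _ _
    have hkey : 4 * (ν * N k ^ (-τ)) ≤ 2*|Real.sin (π*x)| := by linarith
    rw [hfact, norm_mul, h1]
    exact mul_le_mul hkey h3 (by linarith) (by positivity)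
  have hrpos : ∀ k : ℤ×ℤ, k ≠ 0 → 0 < 4 * (ν * N k ^ (-τ)) * (1 - l) := by
    intro k hk
    have : 0 < N k := lt_of_lt_of_le one_pos (hN1 k hk)
    have h2 := Real.rpow_pos_of_pos this (-τ)
    have h3 : (0:ℝ) < 1 - l := by linarith
    exact mul_pos (mul_pos (by norm_num : (0:ℝ) < 4) (mul_pos hν h2)) h3
  have hdne : ∀ k : ℤ×ℤ, k ≠ 0 → d k ≠ 0 := by
    intro k hk
    intro h0
    have := hdlb k hk
    rw [h0, norm_zero] at this
    exact absurd (lt_of_lt_of_le (hrpos k hk) this) (lt_irrefl 0)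
  -- bound for ghat
  set A : ℝ := C / (4 * ν * (1-l)) * (2*τ/δ)^τ with hAdef
  have hτ0 : (0:ℝ) < τ := by linarith
  have hden : (0:ℝ) < 4 * ν * (1-l) := by nlinarith
  have hA0 : 0 ≤ A := by
    apply mul_nonneg (div_nonneg hC.le hden.le)
    exact Real.rpow_nonneg (div_nonneg (by linarith) hδ.le) _
  have hgb : ∀ k, ‖ghat k‖ ≤ A * Real.exp (-(δ/2) * S k) := by
    intro k
    by_cases hk : k = 0
    · simp only [ghat, hk, if_pos rfl, norm_zero]
      exact mul_nonneg hA0 (Real.exp_pos _).le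
    · have hNpos : 0 < N k := lt_of_lt_of_le one_pos (hN1 k hk)
      have hgval : ‖ghat k‖ = ‖η k‖ / ‖d k‖ := by
        simp only [ghat, if_neg hk, norm_div]
      rw [hgval]
      have step1 : ‖η k‖ / ‖d k‖
          ≤ (C * Real.exp (-δ * S k)) / (4 * (ν * N k ^ (-τ)) * (1 - l)) := by
        apply div_le_div₀ (by positivity) ?_ (hrpos k hk) (hdlb k hk)
        have := hdecay k
        simpa [hS] using this
      have heq : (C * Real.exp (-δ * S k)) / (4 * (ν * N k ^ (-τ)) * (1 - l))
          = C / (4 * ν * (1-l)) * (N k ^ τ * Real.exp (-δ * S k)) := by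
        rw [Real.rpow_neg (hN0 k)]
        have hNτ : N k ^ τ ≠ 0 := ne_of_gt (Real.rpow_pos_of_pos hNpos τ)
        field_simp
      have key : N k ^ τ ≤ (2*τ/δ)^τ * Real.exp ((δ/2) * S k) := by
        have hle : N k ≤ (2*τ/δ) * Real.exp ((δ/(2*τ)) * S k) := by
          have hy := Real.add_one_le_exp ((δ/(2*τ)) * S k)
          have hfr : (0:ℝ) < 2*τ/δ := by positivity
          calc N k ≤ S k := hNS k
            _ ≤ (2*τ/δ) * ((δ/(2*τ)) * S k + 1) := by
                rw [mul_add, ← mul_assoc]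
                have hid : (2*τ/δ) * (δ/(2*τ)) = 1 := by field_simp
                rw [hid, one_mul]
                nlinarith
            _ ≤ (2*τ/δ) * Real.exp ((δ/(2*τ)) * S k) :=
                mul_le_mul_of_nonneg_left hy hfr.le
        calc N k ^ τ ≤ ((2*τ/δ) * Real.exp ((δ/(2*τ)) * S k)) ^ τ :=
              Real.rpow_le_rpow (hN0 k) hle hτ0.le
          _ = (2*τ/δ)^τ * Real.exp ((δ/2) * S k) := by
              rw [Real.mul_rpow (by positivity) (Real.exp_pos _).le,
                Real.rpow_def_of_pos (Real.exp_pos _), Real.log_exp]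
              congr 2
              field_simp
      calc ‖η k‖ / ‖d k‖ ≤ C / (4 * ν * (1-l)) * (N k ^ τ * Real.exp (-δ * S k)) :=
            step1.trans_eq heq
        _ ≤ C / (4 * ν * (1-l)) * (((2*τ/δ)^τ * Real.exp ((δ/2) * S k)) * Real.exp (-δ * S k)) := by
            apply mul_le_mul_of_nonneg_left _ (div_nonneg hC.le hden.le)
            exact mul_le_mul_of_nonneg_right key (Real.exp_pos _).le
        _ = A * Real.exp (-(δ/2) * S k) := by
            rw [show ((2*τ/δ)^τ * Real.exp ((δ/2) * S k)) * Real.exp (-δ * S k)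
                = (2*τ/δ)^τ * Real.exp (-(δ/2) * S k) from by
              rw [mul_assoc, ← Real.exp_add]; congr 1; ring]
            rw [hAdef]; ring
  -- summability
  have hgsum : Summable (fun k : ℤ×ℤ => ‖ghat k‖) := by
    have hbase := (summable_exp_decay (half_pos hδ)).mul_left A
    apply Summable.of_nonneg_of_le (fun k => norm_nonneg _) _ hbase
    intro k
    simpa [hS] using hgb k
  have hηnorm : Summable (fun k : ℤ×ℤ => ‖η k‖) := by
    have hbase := (summable_exp_decay hδ).mul_left C
    apply Summable.of_nonneg_of_le (fun k => norm_nonneg _) _ hbase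
    intro k
    simpa using hdecay k
  refine ⟨hgsum, ?_⟩
  intro ψ
  set E : (ℝ×ℝ) → (ℤ×ℤ) → ℂ :=
    fun φ k => Complex.exp (Complex.I * ((k.1:ℂ)*φ.1 + (k.2:ℂ)*φ.2)) with hE
  have hEnorm : ∀ (φ : ℝ×ℝ) (k : ℤ×ℤ), ‖E φ k‖ = 1 := by
    intro φ k
    have harg : Complex.I * ((k.1:ℂ)*(φ.1:ℂ) + (k.2:ℂ)*(φ.2:ℂ))
        = (((k.1:ℝ)*φ.1 + (k.2:ℝ)*φ.2 : ℝ):ℂ) * Complex.I := by push_cast; ring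
    simp only [hE]
    rw [harg, Complex.norm_exp_ofReal_mul_I]
  have hθnorm : ∀ k : ℤ×ℤ,
      ‖Complex.exp (2*(π:ℂ)*Complex.I*((ω.1:ℂ)*k.1+(ω.2:ℂ)*k.2))‖ = 1 := by
    intro k; rw [hcast k]; exact norm_exp_two_pi_I _
  have hθnorm' : ∀ k : ℤ×ℤ,
      ‖Complex.exp (-(2*(π:ℂ)*Complex.I*((ω.1:ℂ)*k.1+(ω.2:ℂ)*k.2)))‖ = 1 := by
    intro k; rw [hcast k]
    rw [show -(2*(π:ℂ)*Complex.I*((t k : ℝ):ℂ)) = 2*(π:ℂ)*Complex.I*((-t k : ℝ):ℂ) from by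
      push_cast; ring]
    exact norm_exp_two_pi_I _
  have hG1 : Summable (fun k : ℤ×ℤ =>
      ghat k * E ψ k * Complex.exp (2*(π:ℂ)*Complex.I*((ω.1:ℂ)*k.1+(ω.2:ℂ)*k.2))) := by
    apply Summable.of_norm
    simp only [norm_mul, hEnorm, hθnorm, mul_one]
    exact hgsum
  have hG2 : Summable (fun k : ℤ×ℤ => ghat k * E ψ k) := by
    apply Summable.of_norm
    simp only [norm_mul, hEnorm, mul_one]
    exact hgsum
  have hG3 : Summable (fun k : ℤ×ℤ =>
      ghat k * E ψ k * Complex.exp (-(2*(π:ℂ)*Complex.I*((ω.1:ℂ)*k.1+(ω.2:ℂ)*k.2)))) := by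
    apply Summable.of_norm
    simp only [norm_mul, hEnorm, hθnorm', mul_one]
    exact hgsum
  set F : ℤ×ℤ → ℂ := fun k => if k = 0 then 0 else η k * E ψ k with hF
  have hFsum : Summable F := by
    apply Summable.of_norm
    apply Summable.of_nonneg_of_le (fun k => norm_nonneg _) _ hηnorm
    intro k
    by_cases hk : k = 0 <;> simp [hF, hk, norm_mul, hEnorm]
  -- rewrite the three evaluations of g
  have hgplus : g (ψ.1 + 2*π*ω.1, ψ.2 + 2*π*ω.2)
      = ∑' k : ℤ×ℤ, ghat k * E ψ k
          * Complex.exp (2*(π:ℂ)*Complex.I*((ω.1:ℂ)*k.1+(ω.2:ℂ)*k.2)) := by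
    simp only [g]
    apply tsum_congr
    intro k
    simp only [hE]
    rw [mul_assoc (ghat k), ← Complex.exp_add]
    congr 2
    push_cast
    ring
  have hgminus : g (ψ.1 - 2*π*ω.1, ψ.2 - 2*π*ω.2)
      = ∑' k : ℤ×ℤ, ghat k * E ψ k
          * Complex.exp (-(2*(π:ℂ)*Complex.I*((ω.1:ℂ)*k.1+(ω.2:ℂ)*k.2))) := by
    simp only [g]
    apply tsum_congr
    intro k
    simp only [hE]
    rw [mul_assoc (ghat k), ← Complex.exp_add]
    congr 2
    push_cast
    ring
  have hgψ : g ψ = ∑' k : ℤ×ℤ, ghat k * E ψ k := by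
    simp only [g, hE]
  have heψ : e ψ = ∑' k : ℤ×ℤ, η k * E ψ k := by
    simp only [e, hE]
  rw [hgplus, hgminus, hgψ, heψ]
  rw [← tsum_mul_left (a := (1 + (l:ℂ))), ← tsum_mul_left (a := (l:ℂ))]
  rw [← hG1.tsum_sub (hG2.mul_left (1+(l:ℂ)))]
  rw [← Summable.tsum_add ((hG1.sub (hG2.mul_left (1+(l:ℂ))))) (hG3.mul_left (l:ℂ))]
  have hpoint : ∀ k : ℤ×ℤ,
      ghat k * E ψ k * Complex.exp (2*(π:ℂ)*Complex.I*((ω.1:ℂ)*k.1+(ω.2:ℂ)*k.2))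
        - (1+(l:ℂ)) * (ghat k * E ψ k)
        + (l:ℂ) * (ghat k * E ψ k
            * Complex.exp (-(2*(π:ℂ)*Complex.I*((ω.1:ℂ)*k.1+(ω.2:ℂ)*k.2)))) = F k := by
    intro k
    by_cases hk : k = 0
    · simp [ghat, hF, hk]
    · have hd := hdne k hk
      have hgval : ghat k = η k / d k := by simp [ghat, hk]
      have hdval : Complex.exp (2*(π:ℂ)*Complex.I*((ω.1:ℂ)*k.1+(ω.2:ℂ)*k.2))
          - (1+(l:ℂ))
          + (l:ℂ) * Complex.exp (-(2*(π:ℂ)*Complex.I*((ω.1:ℂ)*k.1+(ω.2:ℂ)*k.2))) = d k := rfl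
      simp only [hF, if_neg hk, hgval]
      calc η k / d k * E ψ k * Complex.exp (2*(π:ℂ)*Complex.I*((ω.1:ℂ)*k.1+(ω.2:ℂ)*k.2))
            - (1+(l:ℂ)) * (η k / d k * E ψ k)
            + (l:ℂ) * (η k / d k * E ψ k
                * Complex.exp (-(2*(π:ℂ)*Complex.I*((ω.1:ℂ)*k.1+(ω.2:ℂ)*k.2))))
          = η k / d k * E ψ k
              * (Complex.exp (2*(π:ℂ)*Complex.I*((ω.1:ℂ)*k.1+(ω.2:ℂ)*k.2))
                - (1+(l:ℂ))
                + (l:ℂ) * Complex.exp (-(2*(π:ℂ)*Complex.I*((ω.1:ℂ)*k.1+(ω.2:ℂ)*k.2)))) := by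
            ring
        _ = η k / d k * E ψ k * d k := by rw [hdval]
        _ = η k * E ψ k := by field_simp
  rw [tsum_congr hpoint]
  have hone : E ψ 0 = 1 := by
    simp [hE]
  have h1 : (fun k : ℤ×ℤ => η k * E ψ k)
      = fun k => F k + (if k = 0 then η 0 else 0) := by
    funext k
    by_cases hk : k = 0
    · subst hk; simp [hF, hone]
    · simp [hF, hk]
  have hite : Summable (fun k : ℤ×ℤ => if k = 0 then η 0 else 0) :=
    (hasSum_ite_eq (0:ℤ×ℤ) (η 0)).summable
  rw [h1, Summable.tsum_add hFsum hite, tsum_ite_eq]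
  simp only [μ]
  ring
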